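/- In the back-door structural causal model, for every value t of T and every value y of Y, the interventional probability satisfies the back-door adjustment formula: P(Y = y | do(T = t)) = Σ_w P(Y = y | T = t, W = w) · P(W = w), where the sum ranges over values w with P(T = t, W = w) > 0 (equivalently, under the assumption that P(T = t, W = w) > 0 for all w). -/

import Mathlib

open MeasureTheory

/-- Conditional probability `P(A | B) = P(A ∩ B) / P(B)`. -/
noncomputable def condP {Ω : Type*} [MeasurableSpace Ω] (μ : Measure Ω)
    (A B : Set Ω) : ENNReal :=
  μ (A ∩ B) / μ B

/-- **Back-door adjustment formula.**
In the back-door structural causal model with observed confounder `W`, treatment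
`T = f_T(W, E_T)` and outcome `Y = f_Y(T, W, E_Y)`, where `W, E_T, E_Y` are jointly
independent, for every value `t` of `T` and every value `y` of `Y`,
`P(Y = y | do(T = t)) = ∑_w P(Y = y | T = t, W = w) · P(W = w)`,
under the positivity assumption `P(T = t, W = w) > 0` for all `w`.  Here
`P(Y = y | do(T = t)) := P(ω ↦ f_Y(t, W ω, E_Y ω) = y)`. -/
theorem backdoor_adjustment
    {Ω 𝒲 𝒯 𝒴 ℰT ℰY : Type*}
    [MeasurableSpace Ω] [MeasurableSpace 𝒲] [MeasurableSpace 𝒯] [MeasurableSpace 𝒴]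
    [MeasurableSpace ℰT] [MeasurableSpace ℰY]
    [Fintype 𝒲] [Nonempty 𝒲] [MeasurableSingletonClass 𝒲]
    [Fintype 𝒯] [Nonempty 𝒯] [MeasurableSingletonClass 𝒯]
    [Fintype 𝒴] [Nonempty 𝒴] [MeasurableSingletonClass 𝒴]
    (μ : Measure Ω) [IsProbabilityMeasure μ]
    (W : Ω → 𝒲) (ET : Ω → ℰT) (EY : Ω → ℰY)
    (hW : Measurable W) (hET : Measurable ET) (hEY : Measurable EY)
    (fT : 𝒲 × ℰT → 𝒯) (fY : 𝒯 × 𝒲 × ℰY → 𝒴)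
    (hfT : Measurable fT) (hfY : Measurable fY)
    -- joint independence of W, E_T, E_Y
    (hIndep : ∀ (A : Set 𝒲) (B : Set ℰT) (C : Set ℰY),
      MeasurableSet A → MeasurableSet B → MeasurableSet C →
      μ (W ⁻¹' A ∩ ET ⁻¹' B ∩ EY ⁻¹' C)
        = μ (W ⁻¹' A) * μ (ET ⁻¹' B) * μ (EY ⁻¹' C))
    -- structural equations
    (T : Ω → 𝒯) (Y : Ω → 𝒴)
    (hT : ∀ ω, T ω = fT (W ω, ET ω))
    (hY : ∀ ω, Y ω = fY (T ω, W ω, EY ω))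
    (t : 𝒯) (y : 𝒴)
    -- positivity
    (hpos : ∀ w : 𝒲, 0 < μ {ω | T ω = t ∧ W ω = w}) :
    μ {ω | fY (t, W ω, EY ω) = y}
      = ∑ w : 𝒲, condP μ {ω | Y ω = y} {ω | T ω = t ∧ W ω = w}
          * μ {ω | W ω = w} := by

  classical
  have hBTm : ∀ w : 𝒲, MeasurableSet {e : ℰT | fT (w, e) = t} := fun w =>
    (hfT.comp measurable_prodMk_left) (measurableSet_singleton t)
  have hBYm : ∀ w : 𝒲, MeasurableSet {e : ℰY | fY (t, w, e) = y} := fun w =>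
    (hfY.comp (measurable_prodMk_left.comp measurable_prodMk_left))
      (measurableSet_singleton y)
  -- set identities
  have hset1 : ∀ w : 𝒲, {ω | T ω = t ∧ W ω = w}
      = W ⁻¹' {w} ∩ ET ⁻¹' {e | fT (w, e) = t} := by
    intro w
    ext ω
    simp only [Set.mem_setOf_eq, Set.mem_inter_iff, Set.mem_preimage,
      Set.mem_singleton_iff, hT]
    constructor
    · rintro ⟨h1, rfl⟩; exact ⟨rfl, h1⟩
    · rintro ⟨rfl, h2⟩; exact ⟨h2, rfl⟩
  have hset2 : ∀ w : 𝒲, {ω | Y ω = y} ∩ {ω | T ω = t ∧ W ω = w}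
      = W ⁻¹' {w} ∩ ET ⁻¹' {e | fT (w, e) = t} ∩ EY ⁻¹' {e | fY (t, w, e) = y} := by
    intro w
    ext ω
    simp only [Set.mem_setOf_eq, Set.mem_inter_iff, Set.mem_preimage,
      Set.mem_singleton_iff, hT, hY]
    constructor
    · rintro ⟨h0, h1, rfl⟩
      refine ⟨⟨rfl, h1⟩, ?_⟩
      rw [← h1]; exact h0
    · rintro ⟨⟨rfl, h2⟩, h3⟩
      exact ⟨by rw [h2]; exact h3, h2, rfl⟩
  -- independence consequences
  have key3 : ∀ w : 𝒲,
      μ (W ⁻¹' {w} ∩ ET ⁻¹' {e | fT (w, e) = t} ∩ EY ⁻¹' {e | fY (t, w, e) = y})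
      = μ (W ⁻¹' {w}) * μ (ET ⁻¹' {e | fT (w, e) = t})
          * μ (EY ⁻¹' {e | fY (t, w, e) = y}) := fun w =>
    hIndep _ _ _ (measurableSet_singleton w) (hBTm w) (hBYm w)
  have key2 : ∀ w : 𝒲, μ (W ⁻¹' {w} ∩ ET ⁻¹' {e | fT (w, e) = t})
      = μ (W ⁻¹' {w}) * μ (ET ⁻¹' {e | fT (w, e) = t}) := by
    intro w
    have := hIndep {w} {e | fT (w, e) = t} Set.univ (measurableSet_singleton w)
      (hBTm w) MeasurableSet.univ
    simpa using this
  have key1 : ∀ w : 𝒲, μ (W ⁻¹' {w} ∩ EY ⁻¹' {e | fY (t, w, e) = y})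
      = μ (W ⁻¹' {w}) * μ (EY ⁻¹' {e | fY (t, w, e) = y}) := by
    intro w
    have := hIndep {w} Set.univ {e | fY (t, w, e) = y} (measurableSet_singleton w)
      MeasurableSet.univ (hBYm w)
    simpa [mul_comm, mul_assoc, mul_left_comm] using this
  -- decompose the LHS
  have hLHS : {ω | fY (t, W ω, EY ω) = y}
      = ⋃ w ∈ (Finset.univ : Finset 𝒲), (W ⁻¹' {w} ∩ EY ⁻¹' {e | fY (t, w, e) = y}) := by
    ext ω
    simp only [Set.mem_setOf_eq, Set.mem_iUnion, Set.mem_inter_iff, Set.mem_preimage,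
      Set.mem_singleton_iff, Finset.mem_univ, exists_true_left, exists_prop, true_and]
    constructor
    · intro h; exact ⟨W ω, rfl, h⟩
    · rintro ⟨w, rfl, h⟩; exact h
  have hdisj : (↑(Finset.univ : Finset 𝒲) : Set 𝒲).PairwiseDisjoint
      (fun w => W ⁻¹' {w} ∩ EY ⁻¹' {e | fY (t, w, e) = y}) := by
    intro a _ b _ hab
    refine Set.disjoint_left.2 ?_
    rintro ω ⟨ha, _⟩ ⟨hb, _⟩
    exact hab (ha.symm.trans hb)
  have hmeas : ∀ w ∈ (Finset.univ : Finset 𝒲),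
      MeasurableSet (W ⁻¹' {w} ∩ EY ⁻¹' {e | fY (t, w, e) = y}) := fun w _ =>
    (hW (measurableSet_singleton w)).inter (hEY (hBYm w))
  rw [hLHS, measure_biUnion_finset hdisj hmeas]
  refine Finset.sum_congr rfl fun w _ => ?_
  rw [key1 w]
  -- compute condP
  have hWw : {ω | W ω = w} = W ⁻¹' {w} := rfl
  have hden : μ (W ⁻¹' {w}) * μ (ET ⁻¹' {e | fT (w, e) = t}) ≠ 0 := by
    have := hpos w
    rw [hset1 w, key2 w] at this
    exact this.ne'
  have hdenT : μ (W ⁻¹' {w}) * μ (ET ⁻¹' {e | fT (w, e) = t}) ≠ ⊤ := by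
    rw [← key2 w]; exact measure_ne_top μ _
  have hc : condP μ {ω | Y ω = y} {ω | T ω = t ∧ W ω = w}
      = μ (EY ⁻¹' {e | fY (t, w, e) = y}) := by
    rw [condP, hset2 w, hset1 w, key3 w, key2 w, mul_div_assoc,
      ENNReal.mul_div_cancel hden hdenT]
  rw [hc, hWw, mul_comm]
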